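/- Let Γ = (V,E) be a reduced finite simple graph. Then the group Aut^TF(Γ) of two-fold automorphisms of Γ is isomorphic to the group Aut^π(Γ) of two-fold projections of Γ; moreover Aut^π(Γ) = {π₁ ∈ Sym(V) : there exists π₂ ∈ Sym(V) with (π₁,π₂) ∈ Aut^TF(Γ)}. -/

import Mathlib

open SimpleGraph

/-- A graph is reduced (vertex determining) if distinct vertices have distinct
open neighborhoods. -/
def Reduced {V : Type*} (G : SimpleGraph V) : Prop :=
  ∀ u v : V, G.neighborSet u = G.neighborSet v → u = v

/-- The group of two-fold projections of a graph: permutations mapping every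
open neighborhood onto some open neighborhood. -/
def autPi {V : Type*} [Fintype V] (G : SimpleGraph V) : Subgroup (Equiv.Perm V) where
  carrier := {π : Equiv.Perm V | ∀ v : V, ∃ w : V, π '' G.neighborSet v = G.neighborSet w}
  one_mem' := by
    intro v
    exact ⟨v, by simp⟩
  mul_mem' := by
    intro a b ha hb v
    obtain ⟨w, hw⟩ := hb v
    obtain ⟨u, hu⟩ := ha w
    refine ⟨u, ?_⟩
    rw [Equiv.Perm.coe_mul, Set.image_comp, hw, hu]
  inv_mem' := by
    intro a ha v
    have hfin : (Set.range G.neighborSet).Finite := Set.finite_range _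
    have hmaps : Set.MapsTo (Set.image ⇑a) (Set.range G.neighborSet)
        (Set.range G.neighborSet) := by
      rintro s ⟨u, rfl⟩
      obtain ⟨w, hw⟩ := ha u
      exact ⟨w, hw.symm⟩
    have hinj : Set.InjOn (Set.image ⇑a) (Set.range G.neighborSet) :=
      (Set.image_injective.mpr a.injective).injOn
    have hbij := (hfin.injOn_iff_bijOn_of_mapsTo hmaps).mp hinj
    obtain ⟨s, hs, hsv⟩ := hbij.surjOn ⟨v, rfl⟩
    obtain ⟨w, rfl⟩ := hs
    refine ⟨w, ?_⟩
    have : (⇑a⁻¹) '' ((⇑a) '' G.neighborSet w) = G.neighborSet w := by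
      rw [← Set.image_comp]
      simp
    rw [← this, hsv]

/-- The two-fold automorphism group of a graph: pairs of permutations (π₁, π₂) such that
(v,w) is an edge iff (π₁ v, π₂ w) is an edge. -/
def autTF {V : Type*} [Fintype V] (G : SimpleGraph V) :
    Subgroup (Equiv.Perm V × Equiv.Perm V) where
  carrier := {p | ∀ v w : V, G.Adj v w ↔ G.Adj (p.1 v) (p.2 w)}
  one_mem' := by intro v w; rfl
  mul_mem' := by
    intro a b ha hb v w
    rw [hb v w, ha (b.1 v) (b.2 w)]
    rfl
  inv_mem' := by
    intro a ha v w
    have := ha (a.1⁻¹ v) (a.2⁻¹ w)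
    simp only [Equiv.Perm.coe_inv, Equiv.apply_symm_apply] at this
    exact this.symm


lemma mem_autTF_iff {V : Type*} [Fintype V] (G : SimpleGraph V)
    (p₁ p₂ : Equiv.Perm V) :
    (p₁, p₂) ∈ autTF G ↔ ∀ w, p₁ '' G.neighborSet w = G.neighborSet (p₂ w) := by
  constructor
  · intro h w
    ext x
    simp only [Set.mem_image, mem_neighborSet]
    constructor
    · rintro ⟨v, hv, rfl⟩
      exact ((h v w).mp hv.symm).symm
    · intro hx
      refine ⟨p₁⁻¹ x, ?_, by simp⟩
      have := (h (p₁⁻¹ x) w).mpr (by simpa using hx.symm)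
      exact this.symm
  · intro h v w
    constructor
    · intro hvw
      have : p₁ v ∈ G.neighborSet (p₂ w) := by
        rw [← h w]; exact ⟨v, hvw.symm, rfl⟩
      exact this.symm
    · intro hvw
      have hm : p₁ v ∈ p₁ '' G.neighborSet w := by rw [h w]; exact hvw.symm
      obtain ⟨u, hu, he⟩ := hm
      have := p₁.injective he
      subst this
      exact hu.symm

noncomputable def partner {V : Type*} [Fintype V] (G : SimpleGraph V) (hred : Reduced G)
    (π : Equiv.Perm V) (hπ : π ∈ autPi G) : Equiv.Perm V :=
  Equiv.ofBijective (fun w => Classical.choose (hπ w))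
    (Finite.injective_iff_bijective.mp (fun w w' h => by
      have h1 := Classical.choose_spec (hπ w)
      have h2 := Classical.choose_spec (hπ w')
      apply hred
      apply Set.image_injective.mpr π.injective
      rw [h1, h2, h]))

lemma partner_mem {V : Type*} [Fintype V] (G : SimpleGraph V) (hred : Reduced G)
    (π : Equiv.Perm V) (hπ : π ∈ autPi G) :
    (π, partner G hred π hπ) ∈ autTF G := by
  rw [mem_autTF_iff]
  intro w
  exact Classical.choose_spec (hπ w)

/-- For a reduced finite simple graph Γ, the group of two-fold automorphisms Aut^TF(Γ)
is isomorphic to the group of two-fold projections Aut^π(Γ), and Aut^π(Γ) consists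
exactly of the permutations π₁ admitting a partner π₂ with (π₁, π₂) ∈ Aut^TF(Γ). -/
theorem stmt_0 {V : Type*} [Fintype V] (G : SimpleGraph V) (hred : Reduced G) :
    Nonempty (autTF G ≃* autPi G) ∧
      (autPi G : Set (Equiv.Perm V)) =
        {π₁ : Equiv.Perm V | ∃ π₂ : Equiv.Perm V, (π₁, π₂) ∈ autTF G} := by
  have hset : (autPi G : Set (Equiv.Perm V)) =
      {π₁ : Equiv.Perm V | ∃ π₂ : Equiv.Perm V, (π₁, π₂) ∈ autTF G} := by
    ext π
    constructor
    · intro hπ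
      exact ⟨partner G hred π hπ, partner_mem G hred π hπ⟩
    · rintro ⟨π₂, hmem⟩
      intro v
      exact ⟨π₂ v, ((mem_autTF_iff G π π₂).mp hmem) v⟩
  refine ⟨⟨?_⟩, hset⟩
  have hmap : ∀ p : autTF G, (p : Equiv.Perm V × Equiv.Perm V).1 ∈ autPi G := by
    rintro ⟨⟨a, b⟩, hp⟩
    intro v
    exact ⟨b v, ((mem_autTF_iff G a b).mp hp) v⟩
  refine MulEquiv.ofBijective
    ({ toFun := fun p => ⟨(p : Equiv.Perm V × Equiv.Perm V).1, hmap p⟩,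
       map_one' := rfl,
       map_mul' := fun p q => rfl } : autTF G →* autPi G) ⟨?_, ?_⟩
  · rintro ⟨⟨a, b⟩, hp⟩ ⟨⟨c, d⟩, hq⟩ h
    simp only [Subtype.mk.injEq] at h ⊢
    have hac : a = c := congrArg Subtype.val h
    subst hac
    have hb := (mem_autTF_iff G a b).mp hp
    have hd := (mem_autTF_iff G a d).mp hq
    refine Prod.ext rfl ?_
    ext w
    apply hred
    rw [← hb w, ← hd w]
  · rintro ⟨π, hπ⟩
    exact ⟨⟨(π, partner G hred π hπ), partner_mem G hred π hπ⟩, rfl⟩
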